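/- Let A, B ∈ ℤ with 4A³ + 27B² ≠ 0 and Q(u,v) = u(v³ + Au²v + Bu³). If (u,v) ∈ ℤ² is such that Q(u,v) is squarefree and nonzero, then the projective point P = (uv : 1 : u²) is a rational point on the quadratic twist E_{Q(u,v)} : Q(u,v)·y² = x³ + Ax + B, and h_x(P) = log max{|u|, |v|} (where in particular u and v are coprime). -/

import Mathlib

/-- The binary quartic form `Q(u,v) = u(v³ + Au²v + Bu³)`. -/
def QF (A B u v : ℤ) : ℤ := u * (v ^ 3 + A * u ^ 2 * v + B * u ^ 3)

/-- The Weil height of a rational number `x = a/b` in lowest terms: `log max {|a|, |b|}`;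
for a point `P = (X : Y : Z)` on a plane cubic with `Z ≠ 0`, the height `h_x(P)` is the
height of its affine `x`-coordinate `X/Z`. -/
noncomputable def hxQ (x : ℚ) : ℝ := Real.log (max |(x.num : ℝ)| (x.den : ℝ))

/-- If `Q(u,v)` is squarefree and nonzero, then `u` and `v` are coprime, the projective point
`P = (uv : 1 : u²)` lies on the quadratic twist `E_{Q(u,v)} : d·y²·z = x³ + A·x·z² + B·z³`
(with `d = Q(u,v)`), and `h_x(P) = log max {|u|, |v|}` (here the affine `x`-coordinate of `P`
is `uv/u² = v/u`). -/
theorem point_on_twist (A B : ℤ) (hAB : 4 * A ^ 3 + 27 * B ^ 2 ≠ 0) (u v : ℤ)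
    (hsf : Squarefree (QF A B u v)) (hne : QF A B u v ≠ 0) :
    IsCoprime u v ∧
    QF A B u v * 1 ^ 2 * u ^ 2 =
      (u * v) ^ 3 + A * (u * v) * (u ^ 2) ^ 2 + B * (u ^ 2) ^ 3 ∧
    hxQ ((u * v : ℚ) / (u ^ 2 : ℚ)) = Real.log (max (|u| : ℝ) (|v| : ℝ)) := by
  have hu : u ≠ 0 := by rintro rfl; simp [QF] at hne
  have hcop : IsCoprime u v := by
    rw [Int.isCoprime_iff_gcd_eq_one]
    have hg : (Int.gcd u v : ℤ) * (Int.gcd u v : ℤ) ∣ QF A B u v := by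
      have h1 : (Int.gcd u v : ℤ) ∣ u := Int.gcd_dvd_left u v
      have h2 : (Int.gcd u v : ℤ) ∣ v := Int.gcd_dvd_right u v
      exact mul_dvd_mul h1 (dvd_add (dvd_add (h2.pow (n := 3) (by norm_num))
        (h2.mul_left (A * u ^ 2))) ((h1.pow (n := 3) (by norm_num)).mul_left _))
    have := hsf _ hg
    have := Int.isUnit_iff.mp this
    rcases this with h | h
    · exact_mod_cast h
    · omega
  refine ⟨hcop, by simp only [QF]; ring, ?_⟩
  have hq : ((u * v : ℚ) / (u ^ 2 : ℚ)) = (v : ℚ) / (u : ℚ) := by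
    have : (u : ℚ) ≠ 0 := by exact_mod_cast hu
    field_simp
  rw [hq]
  have hcop' : Nat.Coprime v.natAbs u.natAbs :=
    (Int.isCoprime_iff_gcd_eq_one.mp hcop.symm)
  rcases lt_or_gt_of_ne hu with hneg | hpos
  · have h1 : (v : ℚ) / (u : ℚ) = ((-v : ℤ) : ℚ) / ((-u : ℤ) : ℚ) := by
      push_cast; rw [div_neg, neg_div, neg_neg]
    have hpos' : (0:ℤ) < -u := by omega
    have hc : Nat.Coprime (-v).natAbs (-u).natAbs := by simpa using hcop'
    have hn := Rat.num_div_eq_of_coprime hpos' hc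
    have hd := Rat.den_div_eq_of_coprime hpos' hc
    rw [h1]
    unfold hxQ
    rw [hn]
    congr 1
    have hdR : ((((-v:ℤ) : ℚ) / ((-u:ℤ) : ℚ)).den : ℝ) = ((-u : ℤ) : ℝ) := by
      exact_mod_cast congrArg (Int.cast : ℤ → ℝ) hd
    rw [hdR]
    push_cast
    rw [abs_neg]
    rw [max_comm]
    congr 1
    rw [abs_of_neg (by exact_mod_cast hneg : (u:ℝ) < 0)]
  · have hn := Rat.num_div_eq_of_coprime hpos hcop'
    have hd := Rat.den_div_eq_of_coprime hpos hcop'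
    unfold hxQ
    rw [hn]
    have hdR : ((((v:ℤ) : ℚ) / ((u:ℤ) : ℚ)).den : ℝ) = ((u : ℤ) : ℝ) := by
      exact_mod_cast congrArg (Int.cast : ℤ → ℝ) hd
    rw [hdR]
    rw [max_comm]
    congr 2
    rw [abs_of_pos (by exact_mod_cast hpos : (0:ℝ) < (u:ℝ))]
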